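/- Let Γ* be a symmetric d×d real matrix with zero diagonal that is strictly conditionally negative definite, and fix i < j in {1, …, d}. Suppose Q* ∈ 𝒬 satisfies Γ(Q*) = Γ*. Then the partial derivative of the function Γ ↦ (1/2) log det(CM(Γ)) on the cone 𝒞^d with respect to the coordinate Γ_{ij} (perturbing Γ*_{ij} and Γ*_{ji} simultaneously by t and differentiating at t = 0) equals Q*_{ij}/2. -/

import Mathlib

open Matrix Finset

/-- `Θ(Q)`: `Θ(Q)_{ij} = −Q_{ij}` for `i ≠ j` and `Θ(Q)_{ii} = ∑_{j≠i} Q_{ij}`. -/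
noncomputable def thetaOf {d : ℕ} (Q : Matrix (Fin d) (Fin d) ℝ) :
    Matrix (Fin d) (Fin d) ℝ :=
  Matrix.of fun i j => if i = j then ∑ l ∈ univ.filter (fun l => l ≠ i), Q i l else -Q i j

/-- Membership in `𝒬`: symmetric, zero diagonal, and `xᵀΘ(Q)x > 0` for every nonzero
`x` with `∑ᵢ xᵢ = 0`. -/
def memQ {d : ℕ} (Q : Matrix (Fin d) (Fin d) ℝ) : Prop :=
  Q.IsSymm ∧ (∀ i, Q i i = 0) ∧
    ∀ x : Fin d → ℝ, x ≠ 0 → (∑ i, x i) = 0 → 0 < x ⬝ᵥ (thetaOf Q).mulVec x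

/-- The centering matrix `P = I − (1/d)𝟙𝟙ᵀ`. -/
noncomputable def Pmat (d : ℕ) : Matrix (Fin d) (Fin d) ℝ :=
  1 - ((d : ℝ)⁻¹) • Matrix.of (fun _ _ : Fin d => (1 : ℝ))

/-- `S` is the matrix `Σ(Q)`: the unique symmetric matrix with `Σ(Q)𝟙 = 0` and
`Θ(Q)Σ(Q) = P`. -/
def isSigmaOf {d : ℕ} (Q S : Matrix (Fin d) (Fin d) ℝ) : Prop :=
  S.IsSymm ∧ S.mulVec (fun _ => 1) = 0 ∧ thetaOf Q * S = Pmat d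

/-- The variogram associated with `Σ`: `Γ_{ij} = Σ_{ii} + Σ_{jj} − 2Σ_{ij}`. -/
noncomputable def gammaOf {d : ℕ} (S : Matrix (Fin d) (Fin d) ℝ) :
    Matrix (Fin d) (Fin d) ℝ :=
  Matrix.of fun i j => S i i + S j j - 2 * S i j

/-- The inner product `⟨A, B⟩ = ∑_{i<j} A_{ij} B_{ij}` on symmetric matrices with
zero diagonal. -/
noncomputable def sinner {d : ℕ} (A B : Matrix (Fin d) (Fin d) ℝ) : ℝ :=
  ∑ p ∈ univ.filter (fun p : Fin d × Fin d => p.1 < p.2), A p.1 p.2 * B p.1 p.2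

open Classical in
/-- The spanning tree polynomial `τ(Q) = ∑_T ∏_{{i,j}∈T} Q_{ij}`, summed over all
spanning trees of the complete graph on `{1, …, d}`. -/
noncomputable def tau {d : ℕ} (Q : Matrix (Fin d) (Fin d) ℝ) : ℝ :=
  ∑ T ∈ (univ : Finset (SimpleGraph (Fin d))).filter (fun T => T.IsTree),
    ∏ p ∈ univ.filter (fun p : Fin d × Fin d => p.1 < p.2 ∧ T.Adj p.1 p.2), Q p.1 p.2

/-- The Cayley–Menger matrix of `Γ`. -/
noncomputable def CM {d : ℕ} (Γ : Matrix (Fin d) (Fin d) ℝ) :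
    Matrix (Fin (d + 1)) (Fin (d + 1)) ℝ :=
  Matrix.of fun a b =>
    if ha : (a : ℕ) < d then
      (if hb : (b : ℕ) < d then -Γ ⟨a, ha⟩ ⟨b, hb⟩ / 2 else 1)
    else (if (b : ℕ) < d then -1 else 0)

/-- Membership in the cone `𝒞^d` of symmetric matrices with zero diagonal that are
strictly conditionally negative definite. -/
def memC {d : ℕ} (Γ : Matrix (Fin d) (Fin d) ℝ) : Prop :=
  Γ.IsSymm ∧ (∀ i, Γ i i = 0) ∧
    ∀ x : Fin d → ℝ, x ≠ 0 → (∑ i, x i) = 0 → x ⬝ᵥ Γ.mulVec x < 0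

/-! ### Auxiliary material for the proof -/

section AuxProof

variable {d : ℕ} (Q S Γ : Matrix (Fin d) (Fin d) ℝ)

lemma aux_theta_symm (hQ : Q.IsSymm) : (thetaOf Q).IsSymm := by
  ext a b
  simp only [thetaOf, Matrix.transpose_apply, Matrix.of_apply]
  rcases eq_or_ne a b with rfl | h
  · simp
  · simp [h, h.symm, hQ.apply a b]

lemma aux_theta_mulVec_one : (thetaOf Q).mulVec (fun _ => 1) = 0 := by
  funext a
  simp only [Matrix.mulVec, dotProduct, mul_one, Pi.zero_apply]
  rw [← Finset.sum_erase_add _ _ (Finset.mem_univ a)]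
  simp only [thetaOf, Matrix.of_apply, if_pos rfl]
  rw [Finset.sum_congr rfl (fun x hx => if_neg (Finset.ne_of_mem_erase hx).symm),
    Finset.sum_neg_distrib, Finset.filter_ne' univ a]
  simp

lemma aux_theta_rowsum (a : Fin d) : ∑ k, thetaOf Q a k = 0 := by
  have := congrFun (aux_theta_mulVec_one Q) a
  simpa [Matrix.mulVec, dotProduct] using this

lemma aux_theta_colsum (hQ : Q.IsSymm) (b : Fin d) : ∑ k, thetaOf Q k b = 0 := by
  rw [Finset.sum_congr rfl (fun k _ => ((aux_theta_symm Q hQ).apply k b).symm)]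
  exact aux_theta_rowsum Q b

lemma aux_S_mul_theta (hQ : Q.IsSymm) (hSsym : S.IsSymm)
    (hTS : thetaOf Q * S = Pmat d) : S * thetaOf Q = Pmat d := by
  have h := congrArg Matrix.transpose hTS
  rw [Matrix.transpose_mul, hSsym.eq, (aux_theta_symm Q hQ).eq] at h
  rw [h]
  ext a b
  simp only [Pmat, Matrix.transpose_apply, Matrix.sub_apply, Matrix.smul_apply,
    Matrix.of_apply, Matrix.one_apply, smul_eq_mul]
  rcases eq_or_ne a b with rfl | h'
  · simp
  · simp [h', h'.symm]

/-- The diagonal of `S` as a vector. -/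
noncomputable def sDiag {d : ℕ} (S : Matrix (Fin d) (Fin d) ℝ) : Fin d → ℝ :=
  fun a => S a a

/-- `w = Θ(Q) s`. -/
noncomputable def wVec {d : ℕ} (Q S : Matrix (Fin d) (Fin d) ℝ) : Fin d → ℝ :=
  (thetaOf Q).mulVec (sDiag S)

/-- The border vector of the inverse Cayley–Menger matrix. -/
noncomputable def uVec {d : ℕ} (Q S : Matrix (Fin d) (Fin d) ℝ) : Fin d → ℝ :=
  fun a => -(d : ℝ)⁻¹ - wVec Q S a / 2

/-- The corner entry of the inverse Cayley–Menger matrix. -/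
noncomputable def cVal {d : ℕ} (Q S : Matrix (Fin d) (Fin d) ℝ) : ℝ :=
  -((d : ℝ)⁻¹ * (∑ k, sDiag S k) + (∑ k, sDiag S k * wVec Q S k) / 4)

/-- The inverse of the Cayley–Menger matrix, in block form. -/
noncomputable def Nmat {d : ℕ} (Q S : Matrix (Fin d) (Fin d) ℝ) :
    Matrix (Fin (d + 1)) (Fin (d + 1)) ℝ :=
  Matrix.of fun a b =>
    if ha : (a : ℕ) < d then
      (if hb : (b : ℕ) < d then thetaOf Q ⟨a, ha⟩ ⟨b, hb⟩ else uVec Q S ⟨a, ha⟩)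
    else (if hb : (b : ℕ) < d then -uVec Q S ⟨b, hb⟩ else cVal Q S)

lemma aux_sum_wVec (hQ : Q.IsSymm) : ∑ k, wVec Q S k = 0 := by
  simp only [wVec, Matrix.mulVec, dotProduct]
  rw [Finset.sum_comm]
  refine Finset.sum_eq_zero fun k _ => ?_
  rw [← Finset.sum_mul, aux_theta_colsum Q hQ, zero_mul]

lemma aux_sum_uVec (hQ : Q.IsSymm) (hd : 0 < d) : ∑ k, uVec Q S k = -1 := by
  simp only [uVec]
  rw [Finset.sum_sub_distrib, Finset.sum_const, ← Finset.sum_div, aux_sum_wVec Q S hQ]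
  have : ((d : ℝ)) ≠ 0 := Nat.cast_ne_zero.mpr hd.ne'
  simp [this, Finset.card_univ]

lemma aux_Pmat_mulVec (x : Fin d → ℝ) (a : Fin d) :
    (Pmat d).mulVec x a = x a - (d : ℝ)⁻¹ * ∑ k, x k := by
  simp only [Pmat, Matrix.sub_mulVec, Matrix.one_mulVec, Matrix.smul_mulVec,
    Pi.sub_apply, Pi.smul_apply, smul_eq_mul]
  congr 1
  simp [Matrix.mulVec, dotProduct]

lemma aux_key1 (hQ : Q.IsSymm) (hSsym : S.IsSymm) (hTS : thetaOf Q * S = Pmat d)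
    (hΓ : ∀ a b, Γ a b = S a a + S b b - 2 * S a b) (a b : Fin d) :
    (∑ k, (-Γ a k / 2) * thetaOf Q k b) - uVec Q S b
      = (1 : Matrix (Fin d) (Fin d) ℝ) a b := by
  have hsummand : ∀ k : Fin d, -Γ a k / 2 * thetaOf Q k b
      = S a k * thetaOf Q k b - (S a a / 2) * thetaOf Q k b
        - (sDiag S k * thetaOf Q k b) / 2 := by
    intro k; rw [hΓ a k]; unfold sDiag; ring
  rw [Finset.sum_congr rfl fun k _ => hsummand k, Finset.sum_sub_distrib,
    Finset.sum_sub_distrib]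
  have h1 : ∑ k, S a k * thetaOf Q k b = Pmat d a b := by
    have := congrFun (congrFun (aux_S_mul_theta Q S hQ hSsym hTS) a) b
    simpa [Matrix.mul_apply] using this
  have h2 : ∑ k, (S a a / 2) * thetaOf Q k b = 0 := by
    rw [← Finset.mul_sum, aux_theta_colsum Q hQ, mul_zero]
  have h3 : ∑ k, (sDiag S k * thetaOf Q k b) / 2 = wVec Q S b / 2 := by
    rw [← Finset.sum_div]
    congr 1
    rw [Finset.sum_congr rfl (fun k _ => by
      rw [((aux_theta_symm Q hQ).apply k b).symm, mul_comm])]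
    rfl
  rw [h1, h2, h3]
  simp only [Pmat, uVec, Matrix.sub_apply, Matrix.smul_apply, Matrix.of_apply,
    smul_eq_mul, mul_one]
  ring

lemma aux_key2 (hQ : Q.IsSymm) (hSsym : S.IsSymm) (hTS : thetaOf Q * S = Pmat d)
    (hS1 : S.mulVec (fun _ => 1) = 0) (hd : 0 < d)
    (hΓ : ∀ a b, Γ a b = S a a + S b b - 2 * S a b) (a : Fin d) :
    (∑ k, (-Γ a k / 2) * uVec Q S k) + cVal Q S = 0 := by
  have hSmT : S * thetaOf Q = Pmat d := aux_S_mul_theta Q S hQ hSsym hTS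
  have hrow : ∑ k, S a k = 0 := by
    have := congrFun hS1 a
    simpa [Matrix.mulVec, dotProduct] using this
  have hSw : ∑ k, S a k * wVec Q S k = sDiag S a - (d : ℝ)⁻¹ * ∑ k, sDiag S k := by
    have h1 : S.mulVec (wVec Q S) = (Pmat d).mulVec (sDiag S) := by
      rw [wVec, Matrix.mulVec_mulVec, hSmT]
    have := congrFun h1 a
    rw [aux_Pmat_mulVec] at this
    simpa [Matrix.mulVec, dotProduct, sDiag] using this
  have hsummand : ∀ k : Fin d, -Γ a k / 2 * uVec Q S k
      = S a k * (-(d:ℝ)⁻¹) - S a k * wVec Q S k / 2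
        - (S a a / 2) * uVec Q S k - (sDiag S k * uVec Q S k) / 2 := by
    intro k; rw [hΓ a k, uVec]; unfold sDiag; ring
  rw [Finset.sum_congr rfl fun k _ => hsummand k]
  simp only [Finset.sum_sub_distrib]
  rw [← Finset.sum_mul, hrow, ← Finset.sum_div, hSw, ← Finset.mul_sum]
  have hsu : ∑ k, sDiag S k * uVec Q S k
      = -(d:ℝ)⁻¹ * (∑ k, sDiag S k) - (∑ k, sDiag S k * wVec Q S k) / 2 := by
    simp only [uVec]
    rw [Finset.sum_congr rfl (fun k _ => by ring :
      ∀ k ∈ univ, sDiag S k * (-(d:ℝ)⁻¹ - wVec Q S k / 2)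
        = -(d:ℝ)⁻¹ * sDiag S k - (sDiag S k * wVec Q S k) / 2)]
    rw [Finset.sum_sub_distrib, ← Finset.mul_sum, ← Finset.sum_div]
  have hu : ∑ k, uVec Q S k = -1 := aux_sum_uVec Q S hQ hd
  rw [← Finset.sum_div, hsu, hu, cVal]
  simp only [sDiag]
  ring

lemma aux_CM_mul_Nmat
    (k1 : ∀ a b : Fin d, (∑ k, (-Γ a k / 2) * thetaOf Q k b) - uVec Q S b
      = (1 : Matrix (Fin d) (Fin d) ℝ) a b)
    (k2 : ∀ a : Fin d, (∑ k, (-Γ a k / 2) * uVec Q S k) + cVal Q S = 0)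
    (k3 : ∀ b : Fin d, ∑ k, thetaOf Q k b = 0)
    (k4 : ∑ k, uVec Q S k = -1) :
    CM Γ * Nmat Q S = 1 := by
  ext a b
  rw [Matrix.mul_apply, Fin.sum_univ_castSucc]
  induction a using Fin.lastCases with
  | last =>
    induction b using Fin.lastCases with
    | last =>
      simp only [CM, Nmat, Matrix.of_apply, Fin.val_last, lt_irrefl, dif_neg,
        not_false_iff, Fin.coe_castSucc, Fin.is_lt, dif_pos, if_neg (lt_irrefl d),
        if_pos, Fin.eta, neg_one_mul, zero_mul, add_zero]
      rw [Finset.sum_neg_distrib, k4]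
      simp [Matrix.one_apply]
    | cast b' =>
      simp only [CM, Nmat, Matrix.of_apply, Fin.val_last, lt_irrefl, dif_neg,
        not_false_iff, Fin.coe_castSucc, Fin.is_lt, dif_pos, if_pos, Fin.eta,
        neg_one_mul, zero_mul, add_zero]
      rw [Finset.sum_neg_distrib, k3]
      simp [Matrix.one_apply, (Fin.castSucc_lt_last b').ne']
  | cast a' =>
    induction b using Fin.lastCases with
    | last =>
      simp only [CM, Nmat, Matrix.of_apply, Fin.val_last, lt_irrefl, dif_neg,
        not_false_iff, Fin.coe_castSucc, Fin.is_lt, dif_pos, Fin.eta, one_mul]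
      rw [k2 a']
      simp [Matrix.one_apply, (Fin.castSucc_lt_last a').ne]
    | cast b' =>
      simp only [CM, Nmat, Matrix.of_apply, Fin.coe_castSucc, Fin.is_lt, dif_pos,
        Fin.val_last, lt_irrefl, dif_neg, not_false_iff, Fin.eta, one_mul]
      have h := k1 a' b'
      rw [sub_eq_iff_eq_add] at h
      rw [h, Matrix.one_apply, Matrix.one_apply]
      simp [Fin.castSucc_inj]

lemma aux_trace_mul_single {n : Type*} [Fintype n] [DecidableEq n]
    (N : Matrix n n ℝ) (p q : n) :
    Matrix.trace (N * Matrix.single p q (1:ℝ)) = N q p := by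
  rw [Matrix.trace, Finset.sum_eq_single q]
  · rw [Matrix.diag_apply, Matrix.mul_single_apply_same, mul_one]
  · intro a _ ha
    rw [Matrix.diag_apply, Matrix.mul_single_apply_of_ne 1 p q a a ha]
  · simp

lemma aux_CM_perturb {d : ℕ} (Γs : Matrix (Fin d) (Fin d) ℝ) (i j : Fin d)
    (hij : i < j) (t : ℝ) :
    CM (Matrix.of fun a b =>
        Γs a b + (if (a = i ∧ b = j) ∨ (a = j ∧ b = i) then t else 0))
      = CM Γs + t • ((-(2:ℝ)⁻¹) •
          (Matrix.single (Fin.castSucc i) (Fin.castSucc j) (1:ℝ)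
          + Matrix.single (Fin.castSucc j) (Fin.castSucc i) (1:ℝ))) := by
  ext a b
  simp only [Matrix.add_apply, Matrix.smul_apply, Matrix.single, CM,
    Matrix.of_apply, smul_eq_mul]
  by_cases ha : (a : ℕ) < d <;> by_cases hb : (b : ℕ) < d <;>
    simp only [ha, hb, dif_pos, dif_neg, not_false_iff, if_pos, if_neg]
  · have hij2 : (i:ℕ) < (j:ℕ) := hij
    simp only [Fin.ext_iff, Fin.coe_castSucc]
    split_ifs <;> first | ring1 | (exfalso; omega)
  · have h1 : ¬(Fin.castSucc i = a ∧ Fin.castSucc j = b) := by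
      rintro ⟨-, rfl⟩; exact hb (by simpa using j.isLt)
    have h2 : ¬(Fin.castSucc j = a ∧ Fin.castSucc i = b) := by
      rintro ⟨-, rfl⟩; exact hb (by simpa using i.isLt)
    simp [h1, h2]
  · have h1 : ¬(Fin.castSucc i = a ∧ Fin.castSucc j = b) := by
      rintro ⟨rfl, -⟩; exact ha (by simpa using i.isLt)
    have h2 : ¬(Fin.castSucc j = a ∧ Fin.castSucc i = b) := by
      rintro ⟨rfl, -⟩; exact ha (by simpa using j.isLt)
    simp [h1, h2]
  · have h1 : ¬(Fin.castSucc i = a ∧ Fin.castSucc j = b) := by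
      rintro ⟨rfl, -⟩; exact ha (by simpa using i.isLt)
    have h2 : ¬(Fin.castSucc j = a ∧ Fin.castSucc i = b) := by
      rintro ⟨rfl, -⟩; exact ha (by simpa using j.isLt)
    simp [h1, h2]

open Polynomial in
lemma aux_hasDerivAt {n : ℕ} (Mm C : Matrix (Fin n) (Fin n) ℝ)
    (hdet : Mm.det ≠ 0) (r : ℝ) (htr : Matrix.trace C = r) :
    HasDerivAt (fun t : ℝ => (1/2 : ℝ) * Real.log ((Mm * (1 + t • C)).det))
      (r / 2) 0 := by
  set q : Polynomial ℝ := (Matrix.det (1 + (X : ℝ[X]) • C.map Polynomial.C)).divX.divX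
    with hq
  have hfun : (fun t : ℝ => (1/2 : ℝ) * Real.log ((Mm * (1 + t • C)).det))
      = fun t : ℝ =>
        (1/2 : ℝ) * Real.log (Mm.det * (1 + Matrix.trace C * t + q.eval t * t^2)) := by
    funext t
    rw [Matrix.det_mul, Matrix.det_one_add_smul]
  rw [hfun]
  have h1 : HasDerivAt (fun t : ℝ => 1 + Matrix.trace C * t + q.eval t * t^2)
      (Matrix.trace C) 0 := by
    have ha : HasDerivAt (fun t : ℝ => Matrix.trace C * t) (Matrix.trace C) 0 := by
      simpa using (hasDerivAt_id (0:ℝ)).const_mul (Matrix.trace C)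
    have hb : HasDerivAt (fun t : ℝ => q.eval t * t^2) 0 0 := by
      have := (q.hasDerivAt 0).mul (hasDerivAt_pow 2 (0:ℝ))
      simpa [Pi.mul_def] using this
    simpa [Pi.add_def] using ((hasDerivAt_const (0:ℝ) (1:ℝ)).add ha).add hb
  have h2 : HasDerivAt (fun t : ℝ => Mm.det * (1 + Matrix.trace C * t + q.eval t * t^2))
      (Mm.det * Matrix.trace C) 0 := h1.const_mul _
  have h0 : Mm.det * (1 + Matrix.trace C * 0 + q.eval 0 * 0^2) ≠ 0 := by
    simpa using hdet
  have h3 := h2.log h0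
  have h4 := h3.const_mul (1/2 : ℝ)
  refine h4.congr_deriv ?_
  rw [← htr]
  simp only [mul_zero, add_zero, ne_eq, OfNat.ofNat_ne_zero, not_false_eq_true, zero_pow, mul_one]
  field_simp

end AuxProof

/-- The partial derivative of `Γ ↦ (1/2) log det(CM(Γ))` with respect to the coordinate
`Γ_{ij}` at a point `Γ* = Γ(Q*)` equals `Q*_{ij}/2`. -/
theorem hasDerivAt_half_log_det_CM {d : ℕ}
    (Γs Qs S : Matrix (Fin d) (Fin d) ℝ)
    (hΓsym : Γs.IsSymm) (hΓdiag : ∀ i, Γs i i = 0)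
    (hΓscnd : ∀ x : Fin d → ℝ, x ≠ 0 → (∑ i, x i) = 0 → x ⬝ᵥ Γs.mulVec x < 0)
    (i j : Fin d) (hij : i < j)
    (hQs : memQ Qs) (hS : isSigmaOf Qs S) (hΓQs : gammaOf S = Γs) :
    HasDerivAt
      (fun t : ℝ => (1 / 2) * Real.log ((CM (Matrix.of fun a b =>
        Γs a b + (if (a = i ∧ b = j) ∨ (a = j ∧ b = i) then t else 0))).det))
      (Qs i j / 2) 0 := by
  obtain ⟨hQsym, hQdiag, -⟩ := hQs
  obtain ⟨hSsym, hS1, hTS⟩ := hS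
  have hd : 0 < d := i.pos
  have hΓ : ∀ a b, Γs a b = S a a + S b b - 2 * S a b := by
    intro a b; rw [← hΓQs]; rfl
  -- the inverse of the Cayley–Menger matrix
  have hMN : CM Γs * Nmat Qs S = 1 :=
    aux_CM_mul_Nmat Qs S Γs
      (aux_key1 Qs S Γs hQsym hSsym hTS hΓ)
      (aux_key2 Qs S Γs hQsym hSsym hTS hS1 hd hΓ)
      (aux_theta_colsum Qs hQsym)
      (aux_sum_uVec Qs S hQsym hd)
  have hdetM : (CM Γs).det ≠ 0 := by
    have h := congrArg Matrix.det hMN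
    rw [Matrix.det_mul, Matrix.det_one] at h
    exact left_ne_zero_of_mul_eq_one h
  -- the perturbation direction
  set Bmat : Matrix (Fin (d+1)) (Fin (d+1)) ℝ :=
    (-(2:ℝ)⁻¹) • (Matrix.single (Fin.castSucc i) (Fin.castSucc j) (1:ℝ)
      + Matrix.single (Fin.castSucc j) (Fin.castSucc i) (1:ℝ)) with hB
  -- the trace computation
  have hNij : Nmat Qs S (Fin.castSucc i) (Fin.castSucc j) = -Qs i j := by
    have : thetaOf Qs i j = -Qs i j := by
      simp [thetaOf, hij.ne]
    simp only [Nmat, Matrix.of_apply, Fin.coe_castSucc, Fin.is_lt, dif_pos, Fin.eta]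
    exact this
  have hNji : Nmat Qs S (Fin.castSucc j) (Fin.castSucc i) = -Qs i j := by
    have : thetaOf Qs j i = -Qs j i := by
      simp [thetaOf, hij.ne']
    simp only [Nmat, Matrix.of_apply, Fin.coe_castSucc, Fin.is_lt, dif_pos, Fin.eta]
    rw [this, hQsym.apply i j]
  have htr : Matrix.trace (Nmat Qs S * Bmat) = Qs i j := by
    rw [hB, Matrix.mul_smul, Matrix.trace_smul, Matrix.mul_add, Matrix.trace_add,
      aux_trace_mul_single, aux_trace_mul_single, hNij, hNji]
    simp only [smul_eq_mul]
    ring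
  -- factor the perturbed matrix
  have hfac : ∀ t : ℝ, CM Γs + t • Bmat = CM Γs * (1 + t • (Nmat Qs S * Bmat)) := by
    intro t
    rw [Matrix.mul_add, Matrix.mul_one, Matrix.mul_smul, ← Matrix.mul_assoc, hMN,
      Matrix.one_mul]
  have hfun : (fun t : ℝ => (1 / 2) * Real.log ((CM (Matrix.of fun a b =>
        Γs a b + (if (a = i ∧ b = j) ∨ (a = j ∧ b = i) then t else 0))).det))
      = fun t : ℝ =>
        (1/2 : ℝ) * Real.log ((CM Γs * (1 + t • (Nmat Qs S * Bmat))).det) := by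
    funext t
    rw [aux_CM_perturb Γs i j hij t, ← hB, hfac t]
  rw [hfun]
  exact aux_hasDerivAt (CM Γs) (Nmat Qs S * Bmat) hdetM (Qs i j) htr
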